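/- If p = α(T) = δ(T) < ∞ for a bounded linear operator T on a Banach space X, then (N(T^p), R(T^p)) is the unique reducing pair (V, W) of closed T-invariant subspaces with X = V ⊕ W, T nilpotent on V, and T invertible on W. -/

import Mathlib

private lemma pow_apply_comp' {X : Type*} [NormedAddCommGroup X] [NormedSpace ℝ X]
    (T : X →L[ℝ] X) (a b : ℕ) (x : X) : (T ^ (a + b)) x = (T ^ a) ((T ^ b) x) := by
  rw [pow_add, ContinuousLinearMap.mul_apply]

/-- If `p = α(T) = δ(T) < ∞`, then `(N(T^p), R(T^p))` is the unique reducing pair of closed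
invariant subspaces on which `T` is nilpotent resp. invertible. -/
theorem reducing_pair_unique {X : Type*} [NormedAddCommGroup X]
    [NormedSpace ℝ X] [CompleteSpace X] (T : X →L[ℝ] X) (p : ℕ)
    (hascEq : LinearMap.ker ((T ^ p : X →L[ℝ] X) : X →ₗ[ℝ] X) = LinearMap.ker ((T ^ (p + 1) : X →L[ℝ] X) : X →ₗ[ℝ] X))
    (hascMin : ∀ j : ℕ, j < p → LinearMap.ker ((T ^ j : X →L[ℝ] X) : X →ₗ[ℝ] X) ≠ LinearMap.ker ((T ^ (j + 1) : X →L[ℝ] X) : X →ₗ[ℝ] X))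
    (hdesEq : LinearMap.range ((T ^ p : X →L[ℝ] X) : X →ₗ[ℝ] X) = LinearMap.range ((T ^ (p + 1) : X →L[ℝ] X) : X →ₗ[ℝ] X))
    (hdesMin : ∀ j : ℕ, j < p → LinearMap.range ((T ^ j : X →L[ℝ] X) : X →ₗ[ℝ] X) ≠ LinearMap.range ((T ^ (j + 1) : X →L[ℝ] X) : X →ₗ[ℝ] X)) :
    ∀ V W : Submodule ℝ X, IsClosed (V : Set X) → IsClosed (W : Set X) → IsCompl V W →
      (∀ x ∈ V, T x ∈ V) → (∀ x ∈ W, T x ∈ W) →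
      (∃ n : ℕ, ∀ x ∈ V, (T ^ n) x = 0) →
      Set.BijOn T (W : Set X) (W : Set X) →
      V = LinearMap.ker ((T ^ p : X →L[ℝ] X) : X →ₗ[ℝ] X) ∧ W = LinearMap.range ((T ^ p : X →L[ℝ] X) : X →ₗ[ℝ] X) := by
  intro V W hVc hWc hcompl hVinv hWinv hnil hbij
  obtain ⟨n, hn⟩ := hnil
  -- kernel stabilization
  have hker : ∀ k : ℕ, LinearMap.ker ((T ^ (p + k) : X →L[ℝ] X) : X →ₗ[ℝ] X) = LinearMap.ker ((T ^ p : X →L[ℝ] X) : X →ₗ[ℝ] X) := by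
    intro k
    induction k with
    | zero => rfl
    | succ k ih =>
      apply le_antisymm
      · intro x hx
        have hx0 : (T ^ (p + (k + 1))) x = 0 := hx
        have hTx : (T ^ (p + k)) (T x) = 0 := by
          have h1 : (T ^ (p + (k + 1))) x = (T ^ (p + k)) ((T ^ 1) x) := by
            rw [show p + (k + 1) = (p + k) + 1 by omega]
            exact pow_apply_comp' T (p + k) 1 x
          rw [h1, pow_one] at hx0; exact hx0
        have hTx' : T x ∈ LinearMap.ker ((T ^ p : X →L[ℝ] X) : X →ₗ[ℝ] X) := ih ▸ (LinearMap.mem_ker.mpr hTx)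
        have hx1 : (T ^ (p + 1)) x = 0 := by
          rw [pow_apply_comp' T p 1, pow_one]
          exact LinearMap.mem_ker.mp hTx'
        have : x ∈ LinearMap.ker ((T ^ p : X →L[ℝ] X) : X →ₗ[ℝ] X) := by
          rw [hascEq]; exact LinearMap.mem_ker.mpr hx1
        exact this
      · intro x hx
        show (T ^ (p + (k + 1))) x = 0
        rw [show p + (k + 1) = (k + 1) + p by omega, pow_apply_comp' T (k + 1) p,
          (by exact LinearMap.mem_ker.mp hx : (T ^ p) x = 0), map_zero]
  -- range stabilization
  have hrange : ∀ k : ℕ, LinearMap.range ((T ^ (p + k) : X →L[ℝ] X) : X →ₗ[ℝ] X) = LinearMap.range ((T ^ p : X →L[ℝ] X) : X →ₗ[ℝ] X) := by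
    intro k
    induction k with
    | zero => rfl
    | succ k ih =>
      apply le_antisymm
      · rintro _ ⟨x, rfl⟩
        have : (T ^ (p + (k + 1))) x = (T ^ (p + k)) (T x) := by
          rw [show p + (k + 1) = (p + k) + 1 by omega, pow_apply_comp' T (p + k) 1, pow_one]
        rw [ContinuousLinearMap.coe_coe, this]
        exact ih ▸ (LinearMap.mem_range_self _ (T x))
      · intro y hy
        have hy' : y ∈ LinearMap.range ((T ^ (p + k) : X →L[ℝ] X) : X →ₗ[ℝ] X) := ih.symm ▸ hy
        obtain ⟨x, rfl⟩ := hy'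
        have hx : (T ^ p) x ∈ LinearMap.range ((T ^ (p + 1) : X →L[ℝ] X) : X →ₗ[ℝ] X) :=
          hdesEq ▸ (LinearMap.mem_range_self _ x)
        obtain ⟨z, hz⟩ := hx
        refine ⟨z, ?_⟩
        simp only [ContinuousLinearMap.coe_coe] at hz ⊢
        rw [show p + (k + 1) = k + (p + 1) by omega, pow_apply_comp' T k (p + 1), hz,
          ← pow_apply_comp' T k p, show k + p = p + k by omega]
  -- T^m is bijective on W
  have hbijm : ∀ m : ℕ, Set.BijOn (⇑(T ^ m)) (W : Set X) (W : Set X) := by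
    intro m
    induction m with
    | zero => simpa using Set.bijOn_id (W : Set X)
    | succ m ih =>
      have hco : ⇑(T ^ (m + 1)) = ⇑T ∘ ⇑(T ^ m) := by
        funext x
        rw [show m + 1 = 1 + m by omega]
        simpa using pow_apply_comp' T 1 m x
      rw [hco]
      exact hbij.comp ih
  set N := p + n with hN
  have hnilN : ∀ x ∈ V, (T ^ N) x = 0 := by
    intro x hx
    rw [hN, pow_apply_comp' T p n, hn x hx, map_zero]
  constructor
  · -- V = ker (T ^ p)
    apply le_antisymm
    · intro x hx
      exact hker n ▸ (LinearMap.mem_ker.mpr (hnilN x hx))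
    · intro x hx
      have hxtop : x ∈ V ⊔ W := by rw [hcompl.sup_eq_top]; trivial
      obtain ⟨v, hv, w, hw, hvw⟩ := Submodule.mem_sup.mp hxtop
      have hxN : (T ^ N) x = 0 := LinearMap.mem_ker.mp ((hker n).symm ▸ hx)
      have hwN : (T ^ N) w = 0 := by
        have := congrArg (⇑(T ^ N)) hvw
        rw [map_add, hnilN v hv, zero_add, hxN] at this
        exact this
      have hw0 : w = 0 := (hbijm N).injOn hw (W.zero_mem) (by rw [hwN, map_zero])
      rw [← hvw, hw0, add_zero]
      exact hv
  · -- W = range (T ^ p)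
    apply le_antisymm
    · intro w hw
      obtain ⟨w', hw', hww⟩ := (hbijm N).surjOn hw
      exact hrange n ▸ (⟨w', hww⟩ : w ∈ LinearMap.range ((T ^ N : X →L[ℝ] X) : X →ₗ[ℝ] X))
    · intro y hy
      have hy' : y ∈ LinearMap.range ((T ^ N : X →L[ℝ] X) : X →ₗ[ℝ] X) := (hrange n).symm ▸ hy
      obtain ⟨x, rfl⟩ := hy'
      have hxtop : x ∈ V ⊔ W := by rw [hcompl.sup_eq_top]; trivial
      obtain ⟨v, hv, w, hw, hvw⟩ := Submodule.mem_sup.mp hxtop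
      have : (T ^ N) x = (T ^ N) w := by
        rw [← hvw, map_add, hnilN v hv, zero_add]
      rw [ContinuousLinearMap.coe_coe, this]
      exact (hbijm N).mapsTo hw
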